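/- Let (F₂, U₂) be a categorically well-behaved adjunction over sCat between categories N and P (each with forgetful functors U₁ : N → sCat, U₀ : P → sCat, with U₁ = U₀∘U₂). If f : X → Y is a morphism of N such that π₀U₀F₂(f) is an essentially surjective functor, then π₀U₁(f) is essentially surjective; and if π₀U₀F₂(f) is an isofibration, then π₀U₁(f) is an isofibration. -/

import Mathlib

open CategoryTheory Simplicial Opposite

noncomputable section

theorem List.set_get_self' {α} (l : List α) (i : Fin l.length) :
    l.set i (l.get i) = l := by
  apply List.ext_getElem (by simp)
  intro j h1 h2
  simp only [List.getElem_set]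
  split
  · subst ‹_›; rfl
  · rfl

def IsWEq {X Y : SSet} (f : X ⟶ Y) : Prop :=
  ∃ g : SSet.toTop.obj Y ⟶ SSet.toTop.obj X,
    ContinuousMap.Homotopic (SSet.toTop.map f ≫ g).hom (TopCat.Hom.hom (𝟙 (SSet.toTop.obj X))) ∧
    ContinuousMap.Homotopic (g ≫ SSet.toTop.map f).hom (TopCat.Hom.hom (𝟙 (SSet.toTop.obj Y)))

def IsKanFib {X Y : SSet} (f : X ⟶ Y) : Prop :=
  ∀ (n : ℕ) (i : Fin (n + 1)), HasLiftingProperty (SSet.horn n i).ι f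

def edgeRel (X : SSet) (x y : X _⦋0⦌) : Prop :=
  ∃ e : X _⦋1⦌, X.δ 1 e = x ∧ X.δ 0 e = y

def pi0 (X : SSet) : Type := Quot (edgeRel X)

def pi0Map {X Y : SSet} (f : X ⟶ Y) : pi0 X → pi0 Y :=
  Quot.lift (fun x => Quot.mk _ (f.app _ x)) (by
    rintro a b ⟨e, h1, h0⟩
    apply Quot.sound
    refine ⟨f.app _ e, ?_, ?_⟩
    · rw [← h1]; exact (NatTrans.naturality_apply f _ e).symm
    · rw [← h0]; exact (NatTrans.naturality_apply f _ e).symm)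


/-- A (small) simplicially enriched category: objects, hom simplicial sets, identity
vertices, and a levelwise composition natural in the simplicial direction. -/
structure SCat where
  Obj : Type
  homS : Obj → Obj → SSet
  unitS : ∀ a : Obj, (homS a a) _⦋0⦌
  compS : ∀ {a b c : Obj} (n : SimplexCategoryᵒᵖ),
    (homS a b).obj n → (homS b c).obj n → (homS a c).obj n
  compS_natural : ∀ {a b c : Obj} {n m : SimplexCategoryᵒᵖ} (φ : n ⟶ m)
    (x : (homS a b).obj n) (y : (homS b c).obj n),
    compS m ((homS a b).map φ x) ((homS b c).map φ y) =
      (homS a c).map φ (compS n x y)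

/-- Simplicial functors between simplicially enriched categories. -/
structure SFun (C D : SCat) where
  obj : C.Obj → D.Obj
  map : ∀ a b : C.Obj, C.homS a b ⟶ D.homS (obj a) (obj b)
  map_unit : ∀ a : C.Obj,
    (map a a).app (op (SimplexCategory.mk 0)) (C.unitS a) = D.unitS (obj a)
  map_comp : ∀ {a b c : C.Obj} (n : SimplexCategoryᵒᵖ)
    (x : (C.homS a b).obj n) (y : (C.homS b c).obj n),
    (map a c).app n (C.compS n x y) =
      D.compS n ((map a b).app n x) ((map b c).app n y)

namespace SFun

def id (C : SCat) : SFun C C where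
  obj := _root_.id
  map a b := 𝟙 _
  map_unit a := rfl
  map_comp := by intros; rfl

def comp {C D E : SCat} (F : SFun C D) (G : SFun D E) : SFun C E where
  obj := G.obj ∘ F.obj
  map a b := F.map a b ≫ G.map _ _
  map_unit a := by
    have h : (F.map a a ≫ G.map (F.obj a) (F.obj a)).app (op (SimplexCategory.mk 0))
          (C.unitS a) =
        (G.map (F.obj a) (F.obj a)).app (op (SimplexCategory.mk 0))
          ((F.map a a).app (op (SimplexCategory.mk 0)) (C.unitS a)) := rfl
    rw [h, F.map_unit, G.map_unit]
    rfl
  map_comp := by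
    intro a b c n x y
    have h : ∀ {u v : C.Obj} (z : (C.homS u v).obj n),
        (F.map u v ≫ G.map (F.obj u) (F.obj v)).app n z =
          (G.map (F.obj u) (F.obj v)).app n ((F.map u v).app n z) := fun _ => rfl
    rw [h, h, h, F.map_comp, G.map_comp]

end SFun

/-- A vertex of `C(a, b)` which becomes an isomorphism in the component category
`π₀ C`. -/
def SVertIso (C : SCat) {a b : C.Obj} (v : (C.homS a b) _⦋0⦌) : Prop :=
  ∃ w : (C.homS b a) _⦋0⦌,
    (Quot.mk (edgeRel _) (C.compS _ v w) : pi0 _) = Quot.mk _ (C.unitS a) ∧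
    (Quot.mk (edgeRel _) (C.compS _ w v) : pi0 _) = Quot.mk _ (C.unitS b)

/-- The set of isomorphisms of the component category `π₀ C`: pairs of objects together
with a `π₀`-class of hom vertices which is invertible. -/
def IsoTriple (C : SCat) : Type :=
  Σ' (a b : C.Obj), { q : pi0 (C.homS a b) // ∃ v, Quot.mk (edgeRel _) v = q ∧ SVertIso C v }

/-- The induced map on sets of isomorphisms of component categories. -/
def isoTripleMap {C D : SCat} (F : SFun C D) : IsoTriple C → IsoTriple D :=
  fun t =>
    ⟨F.obj t.1, F.obj t.2.1, pi0Map (F.map t.1 t.2.1) t.2.2.1, by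
      obtain ⟨v, hv, w, hw1, hw2⟩ := t.2.2.2
      refine ⟨(F.map t.1 t.2.1).app _ v, by rw [← hv]; rfl, (F.map t.2.1 t.1).app _ w,
        ?_, ?_⟩
      · have h1 := congrArg (pi0Map (F.map t.1 t.1)) hw1
        dsimp [pi0Map] at h1
        rw [F.map_comp, F.map_unit] at h1
        exact h1
      · have h2 := congrArg (pi0Map (F.map t.2.1 t.2.1)) hw2
        dsimp [pi0Map] at h2
        rw [F.map_comp, F.map_unit] at h2
        exact h2⟩

/-- `π₀ F` is essentially surjective. -/
def SCatEssSurj {C D : SCat} (F : SFun C D) : Prop :=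
  ∀ b : D.Obj, ∃ (a : C.Obj) (h : (D.homS (F.obj a) b) _⦋0⦌), SVertIso D h

/-- `π₀ F` is an isofibration: isomorphisms of the target starting at an image object
lift to isomorphisms of the source. -/
def SCatIsofib {C D : SCat} (F : SFun C D) : Prop :=
  ∀ (e : C.Obj) (b : D.Obj) (h : (D.homS (F.obj e) b) _⦋0⦌), SVertIso D h →
    ∃ (e' : C.Obj) (hc : F.obj e' = b) (g : (C.homS e e') _⦋0⦌),
      SVertIso C g ∧
        pi0Map (F.map e e') (Quot.mk _ g) =
          cast (show pi0 (D.homS (F.obj e) b) =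
              pi0 (D.homS (F.obj e) (F.obj e')) by rw [hc])
            (Quot.mk (edgeRel _) h : pi0 (D.homS (F.obj e) b))

lemma pi0Map_comp' {X Y Z : SSet} (φ : X ⟶ Y) (ψ : Y ⟶ Z) (q : pi0 X) :
    pi0Map (φ ≫ ψ) q = pi0Map ψ (pi0Map φ q) := by
  induction q using Quot.ind
  rfl

lemma svertIso_map {C D : SCat} (F : SFun C D) {a b : C.Obj} {v : (C.homS a b) _⦋0⦌}
    (hv : SVertIso C v) : SVertIso D ((F.map a b).app (op (SimplexCategory.mk 0)) v) := by
  obtain ⟨w, hw1, hw2⟩ := hv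
  refine ⟨(F.map b a).app _ w, ?_, ?_⟩
  · have h1 := congrArg (pi0Map (F.map a a)) hw1
    dsimp [pi0Map] at h1
    rw [F.map_comp, F.map_unit] at h1
    exact h1
  · have h2 := congrArg (pi0Map (F.map b b)) hw2
    dsimp [pi0Map] at h2
    rw [F.map_comp, F.map_unit] at h2
    exact h2

lemma iso_inj {C D : SCat} (F : SFun C D) (hinj : Function.Injective (isoTripleMap F))
    {a b : C.Obj} (q1 q2 : pi0 (C.homS a b))
    (h1 : ∃ v, Quot.mk (edgeRel _) v = q1 ∧ SVertIso C v)
    (h2 : ∃ v, Quot.mk (edgeRel _) v = q2 ∧ SVertIso C v)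
    (heq : pi0Map (F.map a b) q1 = pi0Map (F.map a b) q2) : q1 = q2 := by
  have key : (⟨a, b, ⟨q1, h1⟩⟩ : IsoTriple C) = ⟨a, b, ⟨q2, h2⟩⟩ := by
    apply hinj
    show (⟨F.obj a, F.obj b, ⟨pi0Map (F.map a b) q1, _⟩⟩ : IsoTriple D) =
      ⟨F.obj a, F.obj b, ⟨pi0Map (F.map a b) q2, _⟩⟩
    congr 2
    exact Subtype.ext heq
  injection key with k1 k2
  injection k2 with k3 k4
  exact congrArg Subtype.val k4

lemma iso_surj {C D : SCat} (F : SFun C D) (hsurj : Function.Surjective (isoTripleMap F))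
    (hobjinj : Function.Injective F.obj)
    {a b : C.Obj} (q : pi0 (D.homS (F.obj a) (F.obj b)))
    (hq : ∃ v, Quot.mk (edgeRel _) v = q ∧ SVertIso D v) :
    ∃ v : (C.homS a b) _⦋0⦌, SVertIso C v ∧
      pi0Map (F.map a b) (Quot.mk (edgeRel _) v) = q := by
  obtain ⟨⟨a', b', s⟩, ht⟩ := hsurj ⟨F.obj a, F.obj b, ⟨q, hq⟩⟩
  simp only [isoTripleMap] at ht
  injection ht with t1 t2
  have ha : a' = a := hobjinj t1
  subst ha
  injection eq_of_heq t2 with t3 t4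
  have hb : b' = b := hobjinj t3
  subst hb
  have t5 : pi0Map (F.map a' b') s.1 = q := congrArg Subtype.val (eq_of_heq t4)
  obtain ⟨v, hv1, hv2⟩ := s.2
  exact ⟨v, hv2, by rw [hv1]; exact t5⟩

lemma svert_transport {C : SCat} {a a' b : C.Obj} (h : a = a')
    (v : (C.homS a' b) _⦋0⦌) (hv : SVertIso C v) :
    ∃ w : (C.homS a b) _⦋0⦌, SVertIso C w := by
  subst h; exact ⟨v, hv⟩

lemma pi0Map_congr_sfun {C D : SCat} {F G : SFun C D} (h : F = G) (a b : C.Obj)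
    (q : pi0 (C.homS a b)) :
    HEq (pi0Map (F.map a b) q) (pi0Map (G.map a b) q) := by
  subst h; rfl

lemma apply_isofib {C D : SCat} (G : SFun C D) (hG : SCatIsofib G)
    (e : C.Obj) {x : D.Obj} (hx : G.obj e = x) (b : D.Obj)
    (h : (D.homS x b) _⦋0⦌) (hiso : SVertIso D h) :
    ∃ (e' : C.Obj) (hc : G.obj e' = b) (g : (C.homS e e') _⦋0⦌),
      SVertIso C g ∧
        ∀ (T : pi0 (D.homS (G.obj e) (G.obj e')) = pi0 (D.homS x (G.obj e')))
          (T' : pi0 (D.homS x b) = pi0 (D.homS x (G.obj e'))),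
          cast T (pi0Map (G.map e e') (Quot.mk (edgeRel _) g)) =
            cast T' (Quot.mk (edgeRel _) h) := by
  subst hx
  obtain ⟨e', hc, g, hgiso, hmap⟩ := hG e b h hiso
  refine ⟨e', hc, g, hgiso, fun T T' => ?_⟩
  rw [eq_of_heq (cast_heq T _), hmap]

/-- Proposition `categorically well-behaved prop`.  Let `(F₂, U₂)`
be an adjunction over `sCat` between `N` and `P`: `F₂ ⊣ U₂`, with `U₁ : N → sCat` the
forgetful functor (given here by its action on objects and morphisms, compatible with
composition), and `U₀ = U₂ ⋙ U₁`, so that `π₀U₀F₂(f) = π₀U₁(U₂(F₂(f)))`.  Assume the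
adjunction is *categorically well-behaved*: (1) `π₀U₁(η_X)` is the identity on objects,
and (2) it induces a bijection on the sets of isomorphisms of the component categories.
Then if `π₀U₀F₂(f)` is essentially surjective so is `π₀U₁(f)`, and if `π₀U₀F₂(f)` is an
isofibration so is `π₀U₁(f)`. -/
theorem statement13 {N P : Type*} [Category N] [Category P]
    (F₂ : N ⥤ P) (U₂ : P ⥤ N) (adj : F₂ ⊣ U₂)
    (U₁o : N → SCat) (U₁m : ∀ {X Y : N}, (X ⟶ Y) → SFun (U₁o X) (U₁o Y))
    (hfunc : ∀ {X Y Z : N} (f : X ⟶ Y) (g : Y ⟶ Z),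
      U₁m (f ≫ g) = (U₁m f).comp (U₁m g))
    (hwb1 : ∀ X : N, ∃ h : (U₁o X).Obj = (U₁o (U₂.obj (F₂.obj X))).Obj,
      (U₁m (adj.unit.app X)).obj = cast h)
    (hwb2 : ∀ X : N, Function.Bijective (isoTripleMap (U₁m (adj.unit.app X))))
    {X Y : N} (f : X ⟶ Y) :
    (SCatEssSurj (U₁m (U₂.map (F₂.map f))) → SCatEssSurj (U₁m f)) ∧
    (SCatIsofib (U₁m (U₂.map (F₂.map f))) → SCatIsofib (U₁m f)) := by
  obtain ⟨hX, hcastX⟩ := hwb1 X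
  obtain ⟨hY, hcastY⟩ := hwb1 Y
  have castinj : ∀ {α β : Type} (h : α = β), Function.Injective (cast h) := by
    intro α β h
    subst h
    exact fun u v hh => hh
  have injX : Function.Injective (U₁m (adj.unit.app X)).obj := by
    rw [hcastX]; exact castinj hX
  have injY : Function.Injective (U₁m (adj.unit.app Y)).obj := by
    rw [hcastY]; exact castinj hY
  have surjX : ∀ c, ∃ a0, (U₁m (adj.unit.app X)).obj a0 = c := by
    intro c
    refine ⟨cast hX.symm c, ?_⟩
    rw [hcastX]
    exact eq_of_heq ((cast_heq _ _).trans (cast_heq _ _))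
  have hnat : f ≫ adj.unit.app Y = adj.unit.app X ≫ U₂.map (F₂.map f) := by
    exact adj.unit.naturality f
  have hLR : (U₁m f).comp (U₁m (adj.unit.app Y)) =
      (U₁m (adj.unit.app X)).comp (U₁m (U₂.map (F₂.map f))) := by
    rw [← hfunc, ← hfunc, hnat]
  constructor
  · intro hG b
    obtain ⟨a', h', hiso'⟩ := hG ((U₁m (adj.unit.app Y)).obj b)
    obtain ⟨a, haa⟩ := surjX a'
    subst haa
    have hobj : (U₁m (adj.unit.app Y)).obj ((U₁m f).obj a) =
        (U₁m (U₂.map (F₂.map f))).obj ((U₁m (adj.unit.app X)).obj a) :=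
      congrFun (congrArg SFun.obj hLR) a
    obtain ⟨w, hw⟩ := svert_transport hobj h' hiso'
    obtain ⟨v, hviso, -⟩ := iso_surj (U₁m (adj.unit.app Y)) (hwb2 Y).2 injY
      (a := (U₁m f).obj a) (b := b) (Quot.mk _ w) ⟨w, rfl, hw⟩
    exact ⟨a, v, hviso⟩
  · intro hG e b h hiso
    have hobj_e : (U₁m (adj.unit.app Y)).obj ((U₁m f).obj e) =
        (U₁m (U₂.map (F₂.map f))).obj ((U₁m (adj.unit.app X)).obj e) :=
      congrFun (congrArg SFun.obj hLR) e
    set h' := ((U₁m (adj.unit.app Y)).map ((U₁m f).obj e) b).app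
      (op (SimplexCategory.mk 0)) h with hh'
    have hiso' : SVertIso _ h' := svertIso_map _ hiso
    obtain ⟨e₁, hc, g, hgiso, hgflex⟩ := apply_isofib (U₁m (U₂.map (F₂.map f))) hG
      ((U₁m (adj.unit.app X)).obj e) hobj_e.symm ((U₁m (adj.unit.app Y)).obj b) h' hiso'
    obtain ⟨e', he'⟩ := surjX e₁
    subst he'
    have hobj_e' : (U₁m (adj.unit.app Y)).obj ((U₁m f).obj e') =
        (U₁m (U₂.map (F₂.map f))).obj ((U₁m (adj.unit.app X)).obj e') :=
      congrFun (congrArg SFun.obj hLR) e'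
    have hb : (U₁m f).obj e' = b := injY (hobj_e'.trans hc)
    subst hb
    obtain ⟨v, hviso, hvmap⟩ := iso_surj (U₁m (adj.unit.app X)) (hwb2 X).2 injX
      (a := e) (b := e') (Quot.mk _ g) ⟨g, rfl, hgiso⟩
    refine ⟨e', rfl, v, hviso, ?_⟩
    have hA : pi0Map (((U₁m f).comp (U₁m (adj.unit.app Y))).map e e')
          (Quot.mk (edgeRel _) v)
        = pi0Map ((U₁m (adj.unit.app Y)).map _ _)
            (pi0Map ((U₁m f).map e e') (Quot.mk (edgeRel _) v)) :=
      pi0Map_comp' _ _ _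
    have hB := pi0Map_congr_sfun hLR e e' (Quot.mk (edgeRel _) v)
    have hC : pi0Map (((U₁m (adj.unit.app X)).comp (U₁m (U₂.map (F₂.map f)))).map e e')
          (Quot.mk (edgeRel _) v)
        = pi0Map ((U₁m (U₂.map (F₂.map f))).map _ _)
            (pi0Map ((U₁m (adj.unit.app X)).map e e') (Quot.mk (edgeRel _) v)) :=
      pi0Map_comp' _ _ _
    rw [hvmap] at hC
    have T : pi0 ((U₁o (U₂.obj (F₂.obj Y))).homS
          ((U₁m (U₂.map (F₂.map f))).obj ((U₁m (adj.unit.app X)).obj e))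
          ((U₁m (U₂.map (F₂.map f))).obj ((U₁m (adj.unit.app X)).obj e')))
        = pi0 ((U₁o (U₂.obj (F₂.obj Y))).homS
          ((U₁m (adj.unit.app Y)).obj ((U₁m f).obj e))
          ((U₁m (U₂.map (F₂.map f))).obj ((U₁m (adj.unit.app X)).obj e'))) := by
      rw [hobj_e]
    have T' : pi0 ((U₁o (U₂.obj (F₂.obj Y))).homS
          ((U₁m (adj.unit.app Y)).obj ((U₁m f).obj e))
          ((U₁m (adj.unit.app Y)).obj ((U₁m f).obj e')))
        = pi0 ((U₁o (U₂.obj (F₂.obj Y))).homS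
          ((U₁m (adj.unit.app Y)).obj ((U₁m f).obj e))
          ((U₁m (U₂.map (F₂.map f))).obj ((U₁m (adj.unit.app X)).obj e'))) := by
      rw [hc]
    have hD := hgflex T T'
    have hheq : HEq (pi0Map ((U₁m (U₂.map (F₂.map f))).map _ _)
          (Quot.mk (edgeRel _) g)) (Quot.mk (edgeRel _) h') :=
      ((cast_heq T _).symm.trans (heq_of_eq hD)).trans (cast_heq T' _)
    have hfull : HEq (pi0Map ((U₁m (adj.unit.app Y)).map _ _)
          (pi0Map ((U₁m f).map e e') (Quot.mk (edgeRel _) v)))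
        (Quot.mk (edgeRel _) h') :=
      (((heq_of_eq hA.symm).trans hB).trans (heq_of_eq hC)).trans hheq
    have hfin : pi0Map ((U₁m (adj.unit.app Y)).map ((U₁m f).obj e) ((U₁m f).obj e'))
          (pi0Map ((U₁m f).map e e') (Quot.mk (edgeRel _) v))
        = pi0Map ((U₁m (adj.unit.app Y)).map ((U₁m f).obj e) ((U₁m f).obj e'))
          (Quot.mk (edgeRel _) h) := eq_of_heq hfull
    have hmain : pi0Map ((U₁m f).map e e') (Quot.mk (edgeRel _) v)
        = Quot.mk (edgeRel _) h := by
      refine iso_inj (U₁m (adj.unit.app Y)) (hwb2 Y).1 _ _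
        ⟨((U₁m f).map e e').app _ v, rfl, svertIso_map _ hviso⟩ ⟨h, rfl, hiso⟩ hfin
    exact hmain.trans (eq_of_heq (cast_heq _ _)).symm
end
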